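/- Fix t > 0. For every θ in the open upper half-plane ℍ, the equation ζ − t·tan ζ = θ has exactly one solution ζ in ℍ, and this solution is simple in the sense that cos²ζ ≠ t (equivalently, the derivative of ζ ↦ ζ − t·tan ζ does not vanish at the solution). -/

import Mathlib

open Complex Real Filter

lemma my_sinh_le_mul_cosh {x : ℝ} (hx : 0 ≤ x) : Real.sinh x ≤ x * Real.cosh x := by
  have hd : ∀ y : ℝ, HasDerivAt (fun y : ℝ => y * Real.cosh y - Real.sinh y)
      (1 * Real.cosh y + y * Real.sinh y - Real.cosh y) y := fun y =>
    ((hasDerivAt_id y).mul (Real.hasDerivAt_cosh y)).sub (Real.hasDerivAt_sinh y)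
  have key : MonotoneOn (fun y : ℝ => y * Real.cosh y - Real.sinh y) (Set.Ici 0) := by
    apply monotoneOn_of_deriv_nonneg (convex_Ici 0)
    · exact ((continuous_id.mul Real.continuous_cosh).sub Real.continuous_sinh).continuousOn
    · intro y _
      exact (hd y).differentiableAt.differentiableWithinAt
    · intro y hy
      rw [interior_Ici, Set.mem_Ioi] at hy
      rw [(hd y).deriv]
      nlinarith [Real.sinh_pos_iff.2 hy]
  have := key (Set.mem_Ici.2 le_rfl) (Set.mem_Ici.2 hx) hx
  simp at this
  linarith

lemma my_sinh_ratio_mono {x y : ℝ} (hx : 0 < x) (hxy : x ≤ y) :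
    y * Real.sinh x ≤ x * Real.sinh y := by
  have hd : ∀ u : ℝ, 0 < u → HasDerivAt (fun u : ℝ => Real.sinh u / u)
      ((Real.cosh u * u - Real.sinh u * 1) / u ^ 2) u := fun u hu =>
    (Real.hasDerivAt_sinh u).div (hasDerivAt_id u) hu.ne'
  have key : MonotoneOn (fun u : ℝ => Real.sinh u / u) (Set.Ici x) := by
    apply monotoneOn_of_deriv_nonneg (convex_Ici x)
    · exact (Real.continuous_sinh.continuousOn).div continuous_id.continuousOn
        (fun u hu => (lt_of_lt_of_le hx (Set.mem_Ici.1 hu)).ne')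
    · intro u hu
      rw [interior_Ici, Set.mem_Ioi] at hu
      exact (hd u (lt_trans hx hu)).differentiableAt.differentiableWithinAt
    · intro u hu
      rw [interior_Ici, Set.mem_Ioi] at hu
      have hu0 : 0 < u := lt_trans hx hu
      rw [(hd u hu0).deriv]
      have h2 := my_sinh_le_mul_cosh hu0.le
      have h3 : 0 ≤ Real.cosh u * u - Real.sinh u * 1 := by nlinarith
      positivity
  have := key (Set.mem_Ici.2 le_rfl) (Set.mem_Ici.2 hxy) hxy
  rw [div_le_div_iff₀ hx (lt_of_lt_of_le hx hxy)] at this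
  linarith

lemma keyY {a b y₁ y₂ : ℝ} (ha : 0 < a) (hab : a < b) (h1 : b ≤ y₁) (h2 : b ≤ y₂)
    (hle : y₂ ≤ y₁) :
    Real.sinh (y₁ - y₂) ^ 2 * ((y₁ - a) * (y₂ - a)) * Real.cosh b ≤
      (y₁ - y₂) ^ 2 * ((Real.sinh y₁ * Real.cosh y₁) * (Real.sinh y₂ * Real.cosh y₂)) := by
  have hb : 0 < b := lt_trans ha hab
  have hy₁ : 0 < y₁ := lt_of_lt_of_le hb h1
  have hy₂ : 0 < y₂ := lt_of_lt_of_le hb h2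
  set Δ := y₁ - y₂ with hΔdef
  have hΔ : 0 ≤ Δ := by simp [hΔdef]; linarith
  have step1 : Real.sinh Δ ^ 2 * y₁ ≤ Δ ^ 2 * (Real.sinh y₁ * Real.cosh y₁) := by
    rcases eq_or_lt_of_le hΔ with h0 | h0
    · simp [← h0]
    · have hΔy : Δ ≤ y₁ := by simp [hΔdef]; linarith
      have hratio := my_sinh_ratio_mono (by linarith : (0:ℝ) < 2 * Δ)
        (by linarith : 2 * Δ ≤ 2 * y₁)
      rw [Real.sinh_two_mul, Real.sinh_two_mul] at hratio
      have hr1 := my_sinh_le_mul_cosh hΔ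
      have hs : 0 ≤ Real.sinh Δ := Real.sinh_nonneg_iff.2 hΔ
      have hA := mul_le_mul_of_nonneg_right hr1 (mul_nonneg hs hy₁.le)
      have hB := mul_le_mul_of_nonneg_left hratio (by positivity : (0:ℝ) ≤ Δ / 4)
      nlinarith [hA, hB]
  have hcb : Real.cosh b ≤ Real.cosh y₂ := by
    rw [Real.cosh_le_cosh, abs_of_pos hb, abs_of_pos hy₂]; exact h2
  have hy2s : y₂ - a ≤ Real.sinh y₂ := le_trans (by linarith) (Real.self_le_sinh_iff.2 hy₂.le)
  have hcbpos : 0 < Real.cosh b := Real.cosh_pos b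
  have hstep2 : (y₂ - a) * Real.cosh b ≤ Real.sinh y₂ * Real.cosh y₂ :=
    mul_le_mul hy2s hcb hcbpos.le (Real.sinh_nonneg_iff.2 hy₂.le)
  -- combine
  have hnn : 0 ≤ Real.sinh Δ ^ 2 := sq_nonneg _
  have hq : 0 ≤ y₂ - a := by linarith
  have t1 : Real.sinh Δ ^ 2 * (y₁ - a) ≤ Δ ^ 2 * (Real.sinh y₁ * Real.cosh y₁) := by
    have : Real.sinh Δ ^ 2 * (y₁ - a) ≤ Real.sinh Δ ^ 2 * y₁ := by
      apply mul_le_mul_of_nonneg_left (by linarith) hnn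
    linarith [step1]
  have t2 := hstep2
  have hprod := mul_le_mul t1 t2 (mul_nonneg hq hcbpos.le)
    (by have := Real.sinh_nonneg_iff.2 hy₁.le; positivity)
  nlinarith [hprod]

lemma keyIneq {a b y₁ y₂ : ℝ} (Δx : ℝ) (ha : 0 < a) (hab : a < b) (h1 : b ≤ y₁) (h2 : b ≤ y₂) :
    (Real.sin Δx ^ 2 + Real.sinh (y₁ - y₂) ^ 2) * ((y₁ - a) * (y₂ - a)) * Real.cosh b ≤
      (Δx ^ 2 + (y₁ - y₂) ^ 2) *
        ((Real.sinh y₁ * Real.cosh y₁) * (Real.sinh y₂ * Real.cosh y₂)) := by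
  have hb : 0 < b := lt_trans ha hab
  have hy₁ : 0 < y₁ := lt_of_lt_of_le hb h1
  have hy₂ : 0 < y₂ := lt_of_lt_of_le hb h2
  -- x-part
  have hsin : Real.sin Δx ^ 2 ≤ Δx ^ 2 := Real.sin_sq_le_sq
  have hxpart : ((y₁ - a) * (y₂ - a)) * Real.cosh b ≤
      (Real.sinh y₁ * Real.cosh y₁) * (Real.sinh y₂ * Real.cosh y₂) := by
    have e1 : y₁ - a ≤ Real.sinh y₁ := le_trans (by linarith) (Real.self_le_sinh_iff.2 hy₁.le)
    have e2 : y₂ - a ≤ Real.sinh y₂ := le_trans (by linarith) (Real.self_le_sinh_iff.2 hy₂.le)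
    have e3 : Real.cosh b ≤ Real.cosh y₁ := by
      rw [Real.cosh_le_cosh, abs_of_pos hb, abs_of_pos hy₁]; exact h1
    have e4 : (1:ℝ) ≤ Real.cosh y₂ := Real.one_le_cosh y₂
    have p1 : 0 ≤ y₁ - a := by linarith
    have p2 : 0 ≤ y₂ - a := by linarith
    have t1 : (y₁ - a) * Real.cosh b ≤ Real.sinh y₁ * Real.cosh y₁ :=
      mul_le_mul e1 e3 (Real.cosh_pos b).le (Real.sinh_nonneg_iff.2 hy₁.le)
    have t2 : (y₂ - a) ≤ Real.sinh y₂ * Real.cosh y₂ := by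
      nlinarith [Real.sinh_pos_iff.2 hy₂]
    have hprod := mul_le_mul t1 t2 p2 (by positivity)
    nlinarith [hprod]
  -- y-part, by symmetry
  have hypart : Real.sinh (y₁ - y₂) ^ 2 * ((y₁ - a) * (y₂ - a)) * Real.cosh b ≤
      (y₁ - y₂) ^ 2 * ((Real.sinh y₁ * Real.cosh y₁) * (Real.sinh y₂ * Real.cosh y₂)) := by
    rcases le_total y₂ y₁ with h | h
    · exact keyY ha hab h1 h2 h
    · have := keyY ha hab h2 h1 h
      have e1 : Real.sinh (y₁ - y₂) ^ 2 = Real.sinh (y₂ - y₁) ^ 2 := by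
        rw [show y₁ - y₂ = -(y₂ - y₁) by ring, Real.sinh_neg]; ring
      have e2 : (y₁ - y₂) ^ 2 = (y₂ - y₁) ^ 2 := by ring
      rw [e1, e2]; linarith [this]
  have p1 : 0 ≤ (y₁ - a) * (y₂ - a) := by nlinarith
  nlinarith [mul_le_mul hsin hxpart (by positivity) (sq_nonneg Δx)]

lemma my_sin_re (z : ℂ) : (Complex.sin z).re = Real.sin z.re * Real.cosh z.im := by
  rw [Complex.sin_eq]
  simp [← Complex.ofReal_sin, ← Complex.ofReal_cos, ← Complex.ofReal_sinh, ← Complex.ofReal_cosh]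

lemma my_sin_im (z : ℂ) : (Complex.sin z).im = Real.cos z.re * Real.sinh z.im := by
  rw [Complex.sin_eq]
  simp [← Complex.ofReal_sin, ← Complex.ofReal_cos, ← Complex.ofReal_sinh, ← Complex.ofReal_cosh]

lemma my_cos_re (z : ℂ) : (Complex.cos z).re = Real.cos z.re * Real.cosh z.im := by
  rw [Complex.cos_eq]
  simp [← Complex.ofReal_sin, ← Complex.ofReal_cos, ← Complex.ofReal_sinh, ← Complex.ofReal_cosh]

lemma my_cos_im (z : ℂ) : (Complex.cos z).im = -(Real.sin z.re * Real.sinh z.im) := by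
  rw [Complex.cos_eq]
  simp [← Complex.ofReal_sin, ← Complex.ofReal_cos, ← Complex.ofReal_sinh, ← Complex.ofReal_cosh]

lemma my_normSq_sin (z : ℂ) :
    Complex.normSq (Complex.sin z) = Real.sin z.re ^ 2 + Real.sinh z.im ^ 2 := by
  rw [Complex.normSq_apply, my_sin_re, my_sin_im]
  nlinarith [Real.sin_sq_add_cos_sq z.re, Real.cosh_sq z.im]

lemma my_normSq_cos (z : ℂ) :
    Complex.normSq (Complex.cos z) = Real.cos z.re ^ 2 + Real.sinh z.im ^ 2 := by
  rw [Complex.normSq_apply, my_cos_re, my_cos_im]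
  nlinarith [Real.sin_sq_add_cos_sq z.re, Real.cosh_sq z.im]

lemma my_cos_ne_zero {z : ℂ} (hz : 0 < z.im) : Complex.cos z ≠ 0 := by
  intro h
  have h2 : Complex.normSq (Complex.cos z) = 0 := by rw [h]; simp
  rw [my_normSq_cos] at h2
  nlinarith [Real.sinh_pos_iff.2 hz, sq_nonneg (Real.cos z.re)]

lemma my_tan_im {z : ℂ} (hz : 0 < z.im) :
    (Complex.tan z).im = Real.sinh z.im * Real.cosh z.im / Complex.normSq (Complex.cos z) := by
  rw [Complex.tan_eq_sin_div_cos, Complex.div_im, my_sin_re, my_sin_im, my_cos_re, my_cos_im]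
  have h := Real.sin_sq_add_cos_sq z.re
  have hN : Complex.normSq (Complex.cos z) ≠ 0 :=
    (Complex.normSq_pos.2 (my_cos_ne_zero hz)).ne'
  field_simp
  linear_combination h

lemma my_tan_sub {z w : ℂ} (hz : Complex.cos z ≠ 0) (hw : Complex.cos w ≠ 0) :
    Complex.tan z - Complex.tan w = Complex.sin (z - w) / (Complex.cos z * Complex.cos w) := by
  rw [Complex.tan_eq_sin_div_cos, Complex.tan_eq_sin_div_cos, Complex.sin_sub]
  field_simp

lemma tanh_mono {u v : ℝ} (hu : 0 ≤ u) (huv : u ≤ v) :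
    Real.sinh u / Real.cosh u ≤ Real.sinh v / Real.cosh v := by
  rw [div_le_div_iff₀ (Real.cosh_pos u) (Real.cosh_pos v)]
  have h := Real.sinh_nonneg_iff.2 (by linarith : (0:ℝ) ≤ v - u)
  rw [Real.sinh_sub] at h
  linarith

lemma coth_anti {u v : ℝ} (hu : 0 < u) (huv : u ≤ v) :
    Real.cosh v / Real.sinh v ≤ Real.cosh u / Real.sinh u := by
  rw [div_le_div_iff₀ (Real.sinh_pos_iff.2 (lt_of_lt_of_le hu huv)) (Real.sinh_pos_iff.2 hu)]
  have h := Real.sinh_nonneg_iff.2 (by linarith : (0:ℝ) ≤ v - u)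
  rw [Real.sinh_sub] at h
  linarith

section main
variable {t : ℝ} {θ : ℂ}

lemma g_im (ht : 0 < t) {z : ℂ} (hz : 0 < z.im) :
    ((θ + (t:ℂ) * Complex.tan z).im - θ.im) * Complex.normSq (Complex.cos z) =
      t * (Real.sinh z.im * Real.cosh z.im) := by
  have hN : Complex.normSq (Complex.cos z) ≠ 0 :=
    (Complex.normSq_pos.2 (my_cos_ne_zero hz)).ne'
  rw [Complex.add_im, Complex.im_ofReal_mul, my_tan_im hz]
  field_simp
  ring

lemma g_im_lower (ht : 0 < t) {z : ℂ} (hz : 0 < z.im) :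
    θ.im + t * (Real.sinh z.im / Real.cosh z.im) ≤ (θ + (t:ℂ) * Complex.tan z).im := by
  have hN : 0 < Complex.normSq (Complex.cos z) := Complex.normSq_pos.2 (my_cos_ne_zero hz)
  have hcosh := Real.cosh_pos z.im
  have hsinh := Real.sinh_pos_iff.2 hz
  have hle : Real.sinh z.im / Real.cosh z.im ≤
      Real.sinh z.im * Real.cosh z.im / Complex.normSq (Complex.cos z) := by
    rw [div_le_div_iff₀ hcosh hN, my_normSq_cos]
    nlinarith [Real.sin_sq_add_cos_sq z.re, Real.cosh_sq z.im]
  rw [Complex.add_im, Complex.im_ofReal_mul, my_tan_im hz]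
  nlinarith [mul_le_mul_of_nonneg_left hle ht.le]

lemma g_im_upper (ht : 0 < t) {z : ℂ} (hz : 0 < z.im) :
    (θ + (t:ℂ) * Complex.tan z).im ≤ θ.im + t * (Real.cosh z.im / Real.sinh z.im) := by
  have hN : 0 < Complex.normSq (Complex.cos z) := Complex.normSq_pos.2 (my_cos_ne_zero hz)
  have hcosh := Real.cosh_pos z.im
  have hsinh := Real.sinh_pos_iff.2 hz
  have hle : Real.sinh z.im * Real.cosh z.im / Complex.normSq (Complex.cos z) ≤
      Real.cosh z.im / Real.sinh z.im := by
    rw [div_le_div_iff₀ hN hsinh, my_normSq_cos]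
    nlinarith [sq_nonneg (Real.cos z.re)]
  rw [Complex.add_im, Complex.im_ofReal_mul, my_tan_im hz]
  nlinarith [mul_le_mul_of_nonneg_left hle ht.le]

lemma contract (ht : 0 < t) (hθ : 0 < θ.im) {b : ℝ} (hab : θ.im < b) {z w : ℂ}
    (hz : b ≤ z.im) (hw : b ≤ w.im) :
    Complex.normSq ((θ + (t:ℂ) * Complex.tan z) - (θ + (t:ℂ) * Complex.tan w)) *
        ((z.im - θ.im) * (w.im - θ.im)) * Real.cosh b ≤
      Complex.normSq (z - w) *
        (((θ + (t:ℂ) * Complex.tan z).im - θ.im) * ((θ + (t:ℂ) * Complex.tan w).im - θ.im)) := by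
  have hb : 0 < b := lt_trans hθ hab
  have hz0 : 0 < z.im := lt_of_lt_of_le hb hz
  have hw0 : 0 < w.im := lt_of_lt_of_le hb hw
  have hcz := my_cos_ne_zero hz0
  have hcw := my_cos_ne_zero hw0
  have hN₁ : 0 < Complex.normSq (Complex.cos z) := Complex.normSq_pos.2 hcz
  have hN₂ : 0 < Complex.normSq (Complex.cos w) := Complex.normSq_pos.2 hcw
  set N₁ := Complex.normSq (Complex.cos z)
  set N₂ := Complex.normSq (Complex.cos w)
  have hgd : (θ + (t:ℂ) * Complex.tan z) - (θ + (t:ℂ) * Complex.tan w) =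
      (t:ℂ) * (Complex.sin (z - w) / (Complex.cos z * Complex.cos w)) := by
    rw [← my_tan_sub hcz hcw]; ring
  have E1 : Complex.normSq ((θ + (t:ℂ) * Complex.tan z) - (θ + (t:ℂ) * Complex.tan w)) *
      (N₁ * N₂) = t ^ 2 * Complex.normSq (Complex.sin (z - w)) := by
    rw [hgd, Complex.normSq_mul, Complex.normSq_div, Complex.normSq_mul, Complex.normSq_ofReal]
    field_simp
    rw [mul_assoc]; exact mul_div_cancel_right₀ _ (mul_pos hN₁ hN₂).ne'
  have E2 := g_im ht hz0 (θ := θ) (t := t)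
  have E3 := g_im ht hw0 (θ := θ) (t := t)
  have key := keyIneq (a := θ.im) (b := b) (z.re - w.re) hθ hab hz hw
  have hA : Complex.normSq (Complex.sin (z - w)) =
      Real.sin (z.re - w.re) ^ 2 + Real.sinh (z.im - w.im) ^ 2 := by
    rw [my_normSq_sin, Complex.sub_re, Complex.sub_im]
  have hC : Complex.normSq (z - w) = (z.re - w.re) ^ 2 + (z.im - w.im) ^ 2 := by
    rw [Complex.normSq_apply, Complex.sub_re, Complex.sub_im]; ring
  -- multiply the goal by N₁ * N₂ > 0
  rw [← mul_le_mul_iff_left₀ (show (0:ℝ) < N₁ * N₂ from mul_pos hN₁ hN₂)]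
  have hkey' := mul_le_mul_of_nonneg_left key (sq_nonneg t)
  calc Complex.normSq ((θ + (t:ℂ) * Complex.tan z) - (θ + (t:ℂ) * Complex.tan w)) *
        ((z.im - θ.im) * (w.im - θ.im)) * Real.cosh b * (N₁ * N₂)
      = t ^ 2 * (Complex.normSq (Complex.sin (z - w)) *
          ((z.im - θ.im) * (w.im - θ.im)) * Real.cosh b) := by
        linear_combination ((z.im - θ.im) * (w.im - θ.im)) * Real.cosh b * E1
    _ = t ^ 2 * ((Real.sin (z.re - w.re) ^ 2 + Real.sinh (z.im - w.im) ^ 2) *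
          ((z.im - θ.im) * (w.im - θ.im)) * Real.cosh b) := by rw [hA]
    _ ≤ t ^ 2 * (((z.re - w.re) ^ 2 + (z.im - w.im) ^ 2) *
          ((Real.sinh z.im * Real.cosh z.im) * (Real.sinh w.im * Real.cosh w.im))) := hkey'
    _ = Complex.normSq (z - w) *
          (((θ + (t:ℂ) * Complex.tan z).im - θ.im) * ((θ + (t:ℂ) * Complex.tan w).im - θ.im)) *
          (N₁ * N₂) := by
        rw [hC]
        linear_combination (-(((z.re - w.re) ^ 2 + (z.im - w.im) ^ 2))) *
          (t * (Real.sinh w.im * Real.cosh w.im) * E2 +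
            (((θ + (t:ℂ) * Complex.tan z).im - θ.im) * N₁) * E3)

end main

set_option maxHeartbeats 1000000 in
theorem stmt9 (t : ℝ) (ht : 0 < t) (θ : ℂ) (hθ : 0 < θ.im) :
    (∃! ζ : ℂ, 0 < ζ.im ∧ ζ - t * Complex.tan ζ = θ) ∧
    (∀ ζ : ℂ, 0 < ζ.im → ζ - t * Complex.tan ζ = θ → (Complex.cos ζ) ^ 2 ≠ (t : ℂ)) := by
  set a : ℝ := θ.im with ha
  set b : ℝ := a + t * (Real.sinh a / Real.cosh a) with hbdef
  have htanh : 0 < Real.sinh a / Real.cosh a :=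
    div_pos (Real.sinh_pos_iff.2 hθ) (Real.cosh_pos a)
  have hab : a < b := by rw [hbdef]; nlinarith
  have hb : 0 < b := lt_trans hθ hab
  set g : ℂ → ℂ := fun ζ => θ + (t:ℂ) * Complex.tan ζ with hgdef
  -- basic: every z with a ≤ z.im has b ≤ (g z).im
  have H1 : ∀ z : ℂ, a ≤ z.im → b ≤ (g z).im := by
    intro z hz
    have hz0 : 0 < z.im := lt_of_lt_of_le hθ hz
    have h1 := g_im_lower (θ := θ) ht hz0
    have h2 := tanh_mono hθ.le hz
    have := mul_le_mul_of_nonneg_left h2 ht.le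
    rw [hbdef]; linarith
  set M : ℝ := a + t * (Real.cosh b / Real.sinh b) with hMdef
  have H2 : ∀ z : ℂ, b ≤ z.im → (g z).im ≤ M := by
    intro z hz
    have hz0 : 0 < z.im := lt_of_lt_of_le hb hz
    have h1 := g_im_upper (θ := θ) ht hz0
    have h2 := coth_anti hb hz
    have := mul_le_mul_of_nonneg_left h2 ht.le
    rw [hMdef]; linarith
  -- any solution is a fixed point of g with b ≤ im
  have Hsol : ∀ ζ : ℂ, 0 < ζ.im → ζ - t * Complex.tan ζ = θ → g ζ = ζ ∧ b ≤ ζ.im := by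
    intro ζ hζ hsol
    have hfix : g ζ = ζ := by rw [hgdef]; simp only; linear_combination -hsol
    have h1 := g_im_lower (θ := θ) ht hζ
    rw [show θ + (t:ℂ) * Complex.tan ζ = g ζ from rfl, hfix] at h1
    have haζ : a ≤ ζ.im := by nlinarith [div_pos (Real.sinh_pos_iff.2 hζ) (Real.cosh_pos ζ.im)]
    have h2 := H1 ζ haζ
    rw [hfix] at h2
    exact ⟨hfix, h2⟩
  -- uniqueness of fixed points with b ≤ im
  have Huniq : ∀ ζ₁ ζ₂ : ℂ, g ζ₁ = ζ₁ → g ζ₂ = ζ₂ → b ≤ ζ₁.im → b ≤ ζ₂.im → ζ₁ = ζ₂ := by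
    intro ζ₁ ζ₂ h1 h2 hb1 hb2
    have hcon := contract (θ := θ) ht hθ hab hb1 hb2
    rw [show θ + (t:ℂ) * Complex.tan ζ₁ = g ζ₁ from rfl,
      show θ + (t:ℂ) * Complex.tan ζ₂ = g ζ₂ from rfl, h1, h2] at hcon
    have hB : 0 < (ζ₁.im - a) * (ζ₂.im - a) := by
      apply mul_pos <;> linarith
    have hcosh : 1 < Real.cosh b := Real.one_lt_cosh.2 hb.ne'
    have hnn : 0 ≤ Complex.normSq (ζ₁ - ζ₂) := Complex.normSq_nonneg _
    rw [← ha] at hcon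
    have : Complex.normSq (ζ₁ - ζ₂) = 0 := by
      nlinarith [hcon, mul_pos hB (sub_pos.2 hcosh)]
    have := Complex.normSq_eq_zero.1 this
    exact sub_eq_zero.1 this
  constructor
  · -- existence & uniqueness
    set z₀ : ℂ := g (g θ) with hz₀
    set seq : ℕ → ℂ := fun n => g^[n] z₀ with hseq
    have hstep : ∀ n, seq (n + 1) = g (seq n) := by
      intro n; rw [hseq]; simp only [Function.iterate_succ_apply']
    have hP : ∀ n, b ≤ (seq n).im ∧ (seq n).im ≤ M := by
      intro n
      induction n with
      | zero =>
        have h1 : b ≤ (g θ).im := H1 θ le_rfl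
        have h2 : b ≤ (seq 0).im := H1 (g θ) (le_trans hab.le h1)
        exact ⟨h2, H2 (g θ) h1⟩
      | succ n ih =>
        rw [hstep n]
        exact ⟨H1 _ (le_trans hab.le ih.1), H2 _ ih.1⟩
    clear_value z₀
    have hseqval : ∀ n, seq n = g^[n] z₀ := fun n => rfl
    clear hseq
    set NUM : ℕ → ℝ := fun n => Complex.normSq (seq (n + 1) - seq n) with hNUM
    set B : ℕ → ℝ := fun n => ((seq (n + 1)).im - a) * ((seq n).im - a) with hB
    have hBpos : ∀ n, 0 < B n := by
      intro n
      have h1 := (hP n).1; have h2 := (hP (n+1)).1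
      show 0 < ((seq (n + 1)).im - a) * ((seq n).im - a)
      apply mul_pos <;> linarith
    set ρ : ℕ → ℝ := fun n => NUM n / B n with hρ
    have hρnonneg : ∀ n, 0 ≤ ρ n := fun n =>
      div_nonneg (Complex.normSq_nonneg _) (hBpos n).le
    have hcoshb : 0 < Real.cosh b := Real.cosh_pos b
    have hcontr : ∀ n, ρ (n + 1) ≤ ρ n / Real.cosh b := by
      intro n
      have hcon := contract (θ := θ) ht hθ hab (hP (n+1)).1 (hP n).1
      rw [show θ + (t:ℂ) * Complex.tan (seq (n+1)) = g (seq (n+1)) from rfl,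
        show θ + (t:ℂ) * Complex.tan (seq n) = g (seq n) from rfl,
        ← hstep (n+1), ← hstep n] at hcon
      show NUM (n + 1) / B (n + 1) ≤ NUM n / B n / Real.cosh b
      rw [div_div, div_le_div_iff₀ (hBpos (n+1)) (mul_pos (hBpos n) hcoshb)]
      calc NUM (n + 1) * (B n * Real.cosh b)
          = Complex.normSq (seq (n+2) - seq (n+1)) *
              (((seq (n+1)).im - a) * ((seq n).im - a)) * Real.cosh b := by
            rw [hNUM, hB] <;> ring
        _ ≤ Complex.normSq (seq (n+1) - seq n) *
              (((seq (n+2)).im - a) * ((seq (n+1)).im - a)) := hcon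
        _ = NUM n * B (n + 1) := by rw [hNUM, hB] <;> ring
    have hgeo : ∀ n, ρ n ≤ ρ 0 * (1 / Real.cosh b) ^ n := by
      intro n
      induction n with
      | zero => simp
      | succ n ih =>
        have h2 := mul_le_mul_of_nonneg_right ih
          (by positivity : (0:ℝ) ≤ (Real.cosh b)⁻¹)
        have h3 : ρ n / Real.cosh b = ρ n * (Real.cosh b)⁻¹ := div_eq_mul_inv _ _
        have h4 : ρ 0 * (1 / Real.cosh b) ^ (n + 1)
            = ρ 0 * (1 / Real.cosh b) ^ n * (Real.cosh b)⁻¹ := by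
          rw [pow_succ, one_div]; ring
        have h1 := hcontr n
        linarith
    -- distance bound
    have hMa : 0 < M - a := by
      have := (hP 0).1; have := (hP 0).2; linarith
    have hBle : ∀ n, B n ≤ (M - a) ^ 2 := by
      intro n
      have h1 := (hP n).1; have h2 := (hP n).2
      have h3 := (hP (n+1)).1; have h4 := (hP (n+1)).2
      show ((seq (n + 1)).im - a) * ((seq n).im - a) ≤ (M - a) ^ 2
      nlinarith
    have hNUMle : ∀ n, NUM n ≤ (ρ 0 * (M - a) ^ 2) * (1 / Real.cosh b) ^ n := by
      intro n
      have e : NUM n = ρ n * B n := by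
        show NUM n = NUM n / B n * B n
        rw [div_mul_cancel₀ _ (hBpos n).ne']
      rw [e]
      calc ρ n * B n ≤ ρ n * (M - a) ^ 2 :=
            mul_le_mul_of_nonneg_left (hBle n) (hρnonneg n)
        _ ≤ (ρ 0 * (1 / Real.cosh b) ^ n) * (M - a) ^ 2 :=
            mul_le_mul_of_nonneg_right (hgeo n) (by positivity)
        _ = (ρ 0 * (M - a) ^ 2) * (1 / Real.cosh b) ^ n := by ring
    set r : ℝ := Real.sqrt (1 / Real.cosh b) with hr
    set C : ℝ := Real.sqrt (ρ 0) * (M - a) with hC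
    have hr1 : r < 1 := by
      have hsq : r ^ 2 = 1 / Real.cosh b := Real.sq_sqrt (by positivity)
      have h1 : 1 / Real.cosh b < 1 := (div_lt_one hcoshb).2 (Real.one_lt_cosh.2 hb.ne')
      nlinarith [Real.sqrt_nonneg (1 / Real.cosh b), hsq, h1]
    have hdist : ∀ n, dist (seq n) (seq (n + 1)) ≤ C * r ^ n := by
      intro n
      have hCr : 0 ≤ C * r ^ n := by
        apply mul_nonneg (mul_nonneg (Real.sqrt_nonneg _) hMa.le)
        positivity
      have hsq : dist (seq n) (seq (n + 1))^2 ≤ (C * r ^ n) ^ 2 := by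
        have e1 : dist (seq n) (seq (n + 1))^2 = NUM n := by
          rw [Complex.dist_eq, Complex.sq_norm, ← Complex.normSq_neg]
          simp only [hNUM]
          congr 1
          ring
        have e2 : (C * r ^ n) ^ 2 = (ρ 0 * (M - a) ^ 2) * (1 / Real.cosh b) ^ n := by
          have : (C * r ^ n) ^ 2 = (Real.sqrt (ρ 0)) ^ 2 * ((r ^ 2) ^ n) * (M - a) ^ 2 := by
            rw [hC]; ring
          rw [this, Real.sq_sqrt (hρnonneg 0), hr, Real.sq_sqrt (by positivity)]
          ring
        rw [e1, e2]; exact hNUMle n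
      nlinarith [dist_nonneg (x := seq n) (y := seq (n+1)), hCr, hsq]
    have hcauchy : CauchySeq seq := cauchySeq_of_le_geometric r C hr1 hdist
    obtain ⟨L, hL⟩ := cauchySeq_tendsto_of_complete hcauchy
    have himL : Filter.Tendsto (fun n => (seq n).im) Filter.atTop (nhds L.im) :=
      (Complex.continuous_im.tendsto L).comp hL
    have hLb : b ≤ L.im := ge_of_tendsto himL (Filter.Eventually.of_forall fun n => (hP n).1)
    have hL0 : 0 < L.im := lt_of_lt_of_le hb hLb
    have hgL : g L = L := by
      have hcont : ContinuousAt g L := by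
        apply ContinuousAt.add continuousAt_const
        exact ContinuousAt.mul continuousAt_const (Complex.continuousAt_tan.2 (my_cos_ne_zero hL0))
      have T1 : Filter.Tendsto (fun n => seq (n + 1)) Filter.atTop (nhds L) :=
        hL.comp (Filter.tendsto_add_atTop_nat 1)
      have T2 : Filter.Tendsto (fun n => g (seq n)) Filter.atTop (nhds (g L)) :=
        hcont.tendsto.comp hL
      have : (fun n => seq (n + 1)) = fun n => g (seq n) := funext hstep
      rw [this] at T1
      exact tendsto_nhds_unique T2 T1
    refine ⟨L, ⟨hL0, ?_⟩, ?_⟩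
    · have : θ + (t:ℂ) * Complex.tan L = L := hgL
      linear_combination -this
    · intro ζ hζ
      obtain ⟨hfix, hbζ⟩ := Hsol ζ hζ.1 hζ.2
      exact Huniq ζ L hfix hgL hbζ hLb
  · -- nondegeneracy
    intro ζ hζ hsol hc
    obtain ⟨hfix, hbζ⟩ := Hsol ζ hζ hsol
    have hN : Complex.normSq (Complex.cos ζ) = t := by
      have h2 : Complex.normSq (Complex.cos ζ) ^ 2 = t ^ 2 := by
        rw [← map_pow, hc, Complex.normSq_ofReal]; ring
      nlinarith [Complex.normSq_nonneg (Complex.cos ζ)]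
    have hIm := g_im (θ := θ) ht hζ
    rw [show θ + (t:ℂ) * Complex.tan ζ = g ζ from rfl, hfix, hN] at hIm
    have hs : ζ.im ≤ Real.sinh ζ.im * Real.cosh ζ.im := by
      nlinarith [Real.self_le_sinh_iff.2 hζ.le, Real.one_le_cosh ζ.im,
        Real.sinh_pos_iff.2 hζ]
    nlinarith [hIm, hs, hζ, hθ]
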